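/- Let (Ω, μ) be a probability space, Y₀, Y₁ : Ω → ℝ integrable random variables, T : Ω → {0,1} measurable, and Z : Ω → {0,1,2} measurable with Z independent of the triple (Y₀, Y₁, T). Define D := 1 if Z = 1, D := T if Z = 2, D := 0 if Z = 0, and Y := Y₁·1{D = 1} + Y₀·1{D = 0}. Suppose μ(Z = z) > 0 for all z ∈ {0,1,2} and μ(T = 0) > 0. Then ( E[Y·1{Z = 1}]/μ(Z = 1) − E[Y·1{Z = 2}]/μ(Z = 2) ) / μ(T = 0) = E[(Y₁ − Y₀)·1{T = 0}]/μ(T = 0). -/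

import Mathlib

open MeasureTheory ProbabilityTheory


lemma aux_int {Ω : Type*} [MeasurableSpace Ω] (μ : Measure Ω) [IsProbabilityMeasure μ]
    (W : Ω → ℝ) (hW : AEStronglyMeasurable W μ)
    (Z : Ω → Fin 3) (hZ : Measurable Z) (z : Fin 3)
    (hind : IndepFun W (fun ω => if Z ω = z then (1:ℝ) else 0) μ) :
    ∫ ω, W ω * (if Z ω = z then (1:ℝ) else 0) ∂μ
      = (∫ ω, W ω ∂μ) * (μ {ω | Z ω = z}).toReal := by
  have hmeas : Measurable (fun ω => if Z ω = z then (1:ℝ) else 0) :=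
    Measurable.ite (hZ (measurableSet_singleton z)) measurable_const measurable_const
  have h := hind.integral_mul_eq_mul_integral hW hmeas.aestronglyMeasurable
  have heq : (fun ω => if Z ω = z then (1:ℝ) else 0)
      = Set.indicator {ω | Z ω = z} (fun _ => (1:ℝ)) := by
    funext ω; simp [Set.indicator_apply]
  have hs : MeasurableSet {ω | Z ω = z} := hZ (measurableSet_singleton z)
  have hι : ∫ ω, (if Z ω = z then (1:ℝ) else 0) ∂μ = (μ {ω | Z ω = z}).toReal := by
    rw [heq, integral_indicator_const (1:ℝ) hs]
    simp [Measure.real]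
  calc ∫ ω, W ω * (if Z ω = z then (1:ℝ) else 0) ∂μ
      = ∫ ω, (W * fun ω => if Z ω = z then (1:ℝ) else 0) ω ∂μ := rfl
    _ = (∫ ω, W ω ∂μ) * ∫ ω, (if Z ω = z then (1:ℝ) else 0) ∂μ := h
    _ = _ := by rw [hι]

/-- In a doubly randomized preference trial, the Wald ratio
`(E[Y | Z=1] - E[Y | Z=2]) / P(T=0)` identifies
`τ(0) = E[(Y₁-Y₀) 1{T=0}] / P(T=0)`. -/
theorem stmt_15 {Ω : Type*} [MeasurableSpace Ω] (μ : Measure Ω) [IsProbabilityMeasure μ]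
    (Y0 Y1 : Ω → ℝ) (hY0 : Integrable Y0 μ) (hY1 : Integrable Y1 μ)
    (T : Ω → Fin 2) (hT : Measurable T)
    (Z : Ω → Fin 3) (hZ : Measurable Z)
    (hindep : IndepFun (fun ω => (Y0 ω, Y1 ω, T ω)) Z μ)
    (D : Ω → Fin 2)
    (hD : ∀ ω, D ω = if Z ω = 1 then 1 else if Z ω = 2 then T ω else 0)
    (Y : Ω → ℝ)
    (hY : ∀ ω, Y ω = Y1 ω * (if D ω = 1 then 1 else 0) + Y0 ω * (if D ω = 0 then 1 else 0))
    (hZpos : ∀ z, 0 < μ {ω | Z ω = z})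
    (hT0 : 0 < μ {ω | T ω = 0}) :
    ((∫ ω, Y ω * (if Z ω = 1 then 1 else 0) ∂μ) / (μ {ω | Z ω = 1}).toReal
        - (∫ ω, Y ω * (if Z ω = 2 then 1 else 0) ∂μ) / (μ {ω | Z ω = 2}).toReal)
        / (μ {ω | T ω = 0}).toReal
      = (∫ ω, (Y1 ω - Y0 ω) * (if T ω = 0 then 1 else 0) ∂μ) / (μ {ω | T ω = 0}).toReal := by
  set g : Ω → ℝ := fun ω => Y1 ω - (Y1 ω - Y0 ω) * (if T ω = 0 then 1 else 0) with hg
  -- indicator of T=0 as Set.indicator, integrability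
  have hsT : MeasurableSet {ω | T ω = 0} := hT (measurableSet_singleton 0)
  have hindic : (fun ω => (Y1 ω - Y0 ω) * (if T ω = 0 then 1 else 0))
      = Set.indicator {ω | T ω = 0} (fun ω => Y1 ω - Y0 ω) := by
    funext ω; by_cases h : T ω = 0 <;> simp [h, Set.indicator_apply]
  have hintI : Integrable (fun ω => (Y1 ω - Y0 ω) * (if T ω = 0 then 1 else 0)) μ := by
    rw [hindic]; exact (hY1.sub hY0).indicator hsT
  have hgint : Integrable g μ := hY1.sub hintI
  -- independence facts
  have hind1 : IndepFun Y1 (fun ω => if Z ω = 1 then (1:ℝ) else 0) μ := by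
    have h := hindep.comp (φ := fun p : ℝ × ℝ × Fin 2 => p.2.1)
      (ψ := fun k : Fin 3 => if k = 1 then (1:ℝ) else 0)
      (measurable_fst.comp measurable_snd) (measurable_of_countable _)
    exact h
  have hind2 : IndepFun g (fun ω => if Z ω = 2 then (1:ℝ) else 0) μ := by
    have h := hindep.comp
      (φ := fun p : ℝ × ℝ × Fin 2 => p.2.1 - (p.2.1 - p.1) * (if p.2.2 = 0 then 1 else 0))
      (ψ := fun k : Fin 3 => if k = 2 then (1:ℝ) else 0)
      ((measurable_fst.comp measurable_snd).sub
        (((measurable_fst.comp measurable_snd).sub measurable_fst).mul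
          ((measurable_of_countable (fun t : Fin 2 => if t = 0 then (1:ℝ) else 0)).comp
            (measurable_snd.comp measurable_snd))))
      (measurable_of_countable _)
    exact h
  -- pointwise rewriting of the integrands
  have e1 : (fun ω => Y ω * (if Z ω = 1 then (1:ℝ) else 0))
      = fun ω => Y1 ω * (if Z ω = 1 then (1:ℝ) else 0) := by
    funext ω; by_cases hz : Z ω = 1 <;> simp [hY, hD, hz]
  have e2 : (fun ω => Y ω * (if Z ω = 2 then (1:ℝ) else 0))
      = fun ω => g ω * (if Z ω = 2 then (1:ℝ) else 0) := by
    funext ω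
    by_cases hz : Z ω = 2
    · by_cases ht : T ω = 0
      · simp [hY, hD, hz, ht, hg]
      · have ht1 : T ω = 1 := by omega
        simp [hY, hD, hz, ht, ht1, hg]
    · simp [hz]
  have key1 := aux_int μ Y1 hY1.1 Z hZ 1 hind1
  have key2 := aux_int μ g hgint.1 Z hZ 2 hind2
  have hP1 : (μ {ω | Z ω = 1}).toReal ≠ 0 :=
    (ENNReal.toReal_pos (hZpos 1).ne' (measure_ne_top μ _)).ne'
  have hP2 : (μ {ω | Z ω = 2}).toReal ≠ 0 :=
    (ENNReal.toReal_pos (hZpos 2).ne' (measure_ne_top μ _)).ne'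
  have hsub : (∫ ω, Y1 ω ∂μ) - ∫ ω, g ω ∂μ
      = ∫ ω, (Y1 ω - Y0 ω) * (if T ω = 0 then 1 else 0) ∂μ := by
    have : ∫ ω, g ω ∂μ
        = (∫ ω, Y1 ω ∂μ) - ∫ ω, (Y1 ω - Y0 ω) * (if T ω = 0 then 1 else 0) ∂μ :=
      integral_sub hY1 hintI
    rw [this]; ring
  rw [e1, e2, key1, key2, mul_div_assoc, div_self hP1, mul_div_assoc, div_self hP2,
    mul_one, mul_one, hsub]
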